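/- arXiv:1804.07149 — 3 statements merged into one kernel-verified Lean document; each statement's English description precedes it below -/
import Mathlib

section
/- Let μ(λ) = -(λη - ξ - ∑_{i=1}^N b_i²/(λ - c_i)) with η > 0, b_i > 0, and c_1 < ... < c_N. Then μ is a rational function of negative type: its reciprocal 1/μ admits a representation 1/μ(λ) = σ - ∑_{i=1}^{N'} β_i²/(λ - γ_i) for some σ ∈ ℝ, some N' ≥ 1, real numbers γ_1 < ... < γ_{N'}, and β_i > 0. -/
open Polynomial Finset

lemma sign_prod_aux {ι : Type*} [DecidableEq ι] (s : Finset ι) (g : ι → ℝ)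
    (h : ∀ k ∈ s, g k ≠ 0) :
    0 < (-1:ℝ)^((s.filter (fun k => g k < 0)).card) * ∏ k ∈ s, g k := by
  classical
  induction s using Finset.induction_on with
  | empty => simp
  | @insert a s' ha ih =>
    have ih' := ih (fun k hk => h k (Finset.mem_insert_of_mem hk))
    have ha' := h a (Finset.mem_insert_self a s')
    rw [Finset.filter_insert, Finset.prod_insert ha]
    rcases lt_or_gt_of_ne ha' with hneg | hpos
    · rw [if_pos hneg, Finset.card_insert_of_notMem (by simp [ha]), pow_succ]
      nlinarith [ih']
    · rw [if_neg (by simp [not_lt.2 hpos.le])]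
      nlinarith [ih']

lemma pos_of_sign {m : ℕ} {x y : ℝ} (hx : 0 < (-1:ℝ)^m * x) (hy : 0 < (-1:ℝ)^m * y) :
    0 < x * y := by
  have h2 : (-1:ℝ)^m * (-1)^m = 1 := by
    rw [← pow_add]; exact Even.neg_one_pow ⟨m, rfl⟩
  have : x * y = ((-1:ℝ)^m * x) * ((-1)^m * y) := by
    rw [mul_mul_mul_comm, h2, one_mul]
  rw [this]; exact mul_pos hx hy

lemma neg_one_pow_congr' {a b : ℕ} (h : a % 2 = b % 2) : (-1:ℝ)^a = (-1:ℝ)^b := by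
  rcases Nat.even_or_odd a with ha | ha
  · rw [Even.neg_one_pow ha, Even.neg_one_pow (by rw [Nat.even_iff] at *; omega)]
  · rw [Odd.neg_one_pow ha, Odd.neg_one_pow (by rw [Nat.odd_iff] at *; omega)]

/-- for `μ(λ) = -(λη - ξ - ∑ bᵢ²/(λ - cᵢ))` with `η > 0`, the reciprocal
`1/μ` has a representation `σ - ∑_{i=1}^{N'} βᵢ²/(λ - γᵢ)` with `γ₁ < ⋯ < γ_{N'}` and
`βᵢ > 0`, the identity being encoded as `μ(λ)·(σ - ∑ βᵢ²/(λ - γᵢ)) = 1` away from the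
poles `cᵢ` and `γᵢ`. -/
theorem stmt5 (N : ℕ) (η ξ : ℝ) (hη : 0 < η)
    (c : Fin N → ℝ) (hc : StrictMono c)
    (bb : Fin N → ℝ) (hb : ∀ i, 0 < bb i) :
    ∃ (N' : ℕ) (σ : ℝ) (γ β : Fin N' → ℝ),
      1 ≤ N' ∧ StrictMono γ ∧ (∀ i, 0 < β i) ∧
      ∀ lam : ℝ, (∀ i, lam ≠ c i) → (∀ i, lam ≠ γ i) →
        (-(lam * η - ξ - ∑ i, (bb i) ^ 2 / (lam - c i))) *
          (σ - ∑ i, (β i) ^ 2 / (lam - γ i)) = 1 := by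
  classical
  set B := ∑ i, (bb i)^2 with hB
  have hB0 : 0 ≤ B := Finset.sum_nonneg fun i _ => sq_nonneg _
  set μ : ℝ → ℝ := fun lam => -(lam * η - ξ - ∑ i, (bb i)^2 / (lam - c i)) with hμ
  -- outer points
  obtain ⟨t, ht1, ht2⟩ : ∃ t : ℝ, t ≤ (ξ - B - 1)/η ∧ ∀ i, t ≤ c i - 1 := by
    refine ⟨(insert ((ξ - B - 1)/η) (Finset.image (fun i => c i - 1) Finset.univ)).min'
      (Finset.insert_nonempty _ _), Finset.min'_le _ _ (Finset.mem_insert_self _ _), fun i =>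
      Finset.min'_le _ _ (Finset.mem_insert_of_mem (Finset.mem_image_of_mem _ (Finset.mem_univ i)))⟩
  obtain ⟨t', ht'1, ht'2⟩ : ∃ t' : ℝ, (ξ + B + 1)/η ≤ t' ∧ ∀ i, c i + 1 ≤ t' := by
    refine ⟨(insert ((ξ + B + 1)/η) (Finset.image (fun i => c i + 1) Finset.univ)).max'
      (Finset.insert_nonempty _ _), Finset.le_max' _ _ (Finset.mem_insert_self _ _), fun i => ?_⟩
    exact Finset.le_max' _ _
      (Finset.mem_insert_of_mem (Finset.mem_image_of_mem (fun i => c i + 1) (Finset.mem_univ i)))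
  have hη' : η ≠ 0 := ne_of_gt hη
  have htη : t * η ≤ ξ - B - 1 := by
    have h := mul_le_mul_of_nonneg_right ht1 (le_of_lt hη)
    rwa [div_mul_cancel₀ _ hη'] at h
  have ht'η : ξ + B + 1 ≤ t' * η := by
    have h := mul_le_mul_of_nonneg_right ht'1 (le_of_lt hη)
    rwa [div_mul_cancel₀ _ hη'] at h
  have hμt : 0 < μ t := by
    have hsum2 : -B ≤ ∑ i, (bb i)^2 / (t - c i) := by
      have hsum : ∀ i : Fin N, -((bb i)^2) ≤ (bb i)^2 / (t - c i) := by
        intro i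
        have h1 : t - c i ≤ -1 := by have := ht2 i; linarith
        rw [le_div_iff_of_neg (by linarith : t - c i < 0)]
        nlinarith [mul_nonneg (sq_nonneg (bb i)) (by linarith : (0:ℝ) ≤ -(t - c i) - 1)]
      have h2 : ∑ i, -((bb i)^2) ≤ ∑ i, (bb i)^2/(t - c i) :=
        Finset.sum_le_sum fun i _ => hsum i
      simpa [hB] using h2
    simp only [hμ]
    linarith
  have hμt' : μ t' < 0 := by
    have hsum2 : ∑ i, (bb i)^2 / (t' - c i) ≤ B := by
      rw [hB]
      exact Finset.sum_le_sum fun i _ =>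
        div_le_self (sq_nonneg _) (by have := ht'2 i; linarith)
    simp only [hμ]
    linarith
  -- polynomials
  set A : Polynomial ℝ := ∏ i, (X - C (c i)) with hA
  set S : Polynomial ℝ := ∑ i, C ((bb i)^2) * ∏ k ∈ Finset.univ.erase i, (X - C (c k)) with hS
  set P : Polynomial ℝ := -(C η * X - C ξ) * A + S with hP
  have hAmonic : A.Monic := monic_prod_of_monic _ _ fun i _ => monic_X_sub_C _
  have hAdeg : A.natDegree = N := by
    rw [hA, natDegree_prod _ _ fun i _ => X_sub_C_ne_zero _]
    simp [natDegree_X_sub_C]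
  have hAeval : ∀ x : ℝ, A.eval x = ∏ i, (x - c i) := by
    intro x; simp [hA, eval_prod]
  have hPA : ∀ lam : ℝ, (∀ i, lam ≠ c i) → P.eval lam = μ lam * A.eval lam := by
    intro lam hlam
    have h1 : ∀ i : Fin N, (bb i)^2 / (lam - c i) * ∏ k, (lam - c k)
        = (bb i)^2 * ∏ k ∈ Finset.univ.erase i, (lam - c k) := by
      intro i
      rw [← Finset.mul_prod_erase Finset.univ _ (Finset.mem_univ i)]
      have hne : lam - c i ≠ 0 := sub_ne_zero.mpr (hlam i)
      field_simp
    have h2 : μ lam * A.eval lam = -(lam*η - ξ) * ∏ k, (lam - c k)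
        + ∑ i, (bb i)^2 * ∏ k ∈ Finset.univ.erase i, (lam - c k) := by
      rw [hAeval]
      simp only [hμ]
      rw [show -(lam*η - ξ - ∑ i, (bb i)^2/(lam - c i))
        = -(lam*η - ξ) + ∑ i, (bb i)^2/(lam-c i) by ring]
      rw [add_mul, Finset.sum_mul]
      congr 1
      exact Finset.sum_congr rfl fun i _ => h1 i
    rw [h2, hP]
    simp only [hS, hA, eval_add, eval_mul, eval_neg, eval_sub, eval_C, eval_X,
      eval_finset_sum, eval_prod]
    ring
  have hPc : ∀ i : Fin N, P.eval (c i) = (bb i)^2 * ∏ k ∈ Finset.univ.erase i, (c i - c k) := by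
    intro i
    rw [hP]
    simp only [hS, hA, eval_add, eval_mul, eval_neg, eval_sub, eval_C, eval_X,
      eval_finset_sum, eval_prod]
    rw [Finset.prod_eq_zero (Finset.mem_univ i) (by ring : c i - c i = 0), mul_zero, zero_add]
    refine Finset.sum_eq_single i ?_ (fun h => absurd (Finset.mem_univ i) h)
    intro k _ hk
    exact mul_eq_zero_of_right _ (Finset.prod_eq_zero
      (Finset.mem_erase.mpr ⟨Ne.symm hk, Finset.mem_univ i⟩) (by ring))
  have hSdeg : S.natDegree ≤ N := by
    rw [hS]
    apply natDegree_sum_le_of_forall_le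
    intro i _
    refine le_trans natDegree_mul_le ?_
    rw [natDegree_C, zero_add]
    rw [natDegree_prod_of_monic _ _ fun k _ => monic_X_sub_C _]
    simp only [natDegree_X_sub_C, Finset.sum_const, smul_eq_mul, mul_one]
    rw [Finset.card_erase_of_mem (Finset.mem_univ i), Finset.card_univ, Fintype.card_fin]
    omega
  have hPdeg : P.natDegree ≤ N + 1 := by
    rw [hP]
    refine le_trans (natDegree_add_le _ _)
      (max_le (le_trans natDegree_mul_le ?_) (le_trans hSdeg (by omega)))
    have h1 : (-(C η * X - C ξ)).natDegree ≤ 1 := by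
      rw [natDegree_neg]
      refine le_trans (natDegree_sub_le _ _) (max_le ?_ ?_)
      · exact le_trans (natDegree_C_mul_le _ _) natDegree_X.le
      · simp [natDegree_C]
    rw [hAdeg]
    omega
  have hPcoeff : P.coeff (N+1) = -η := by
    have hA1 : A.coeff N = 1 := by
      have h := hAmonic.coeff_natDegree
      rwa [hAdeg] at h
    have hA2 : A.coeff (N+1) = 0 := coeff_eq_zero_of_natDegree_lt (by rw [hAdeg]; omega)
    have hS2 : S.coeff (N+1) = 0 :=
      coeff_eq_zero_of_natDegree_lt (lt_of_le_of_lt hSdeg (Nat.lt_succ_self N))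
    rw [hP, coeff_add, hS2, add_zero]
    have hh : -(C η * X - C ξ) * A = C ξ * A - C η * (X * A) := by ring
    rw [hh, coeff_sub, coeff_C_mul, coeff_C_mul, coeff_X_mul, hA1, hA2]
    ring
  -- endpoints
  set e : ℕ → ℝ := fun j => if h : 1 ≤ j ∧ j ≤ N then c ⟨j-1, by omega⟩
    else if j = 0 then t else t' with he
  have he0 : e 0 = t := by simp [he]
  have heN : e (N+1) = t' := by
    simp only [he]
    split_ifs with h1 h2
    · exfalso; omega
    · exact h2.elim
    · rfl
  have hei : ∀ i : Fin N, e ((i:ℕ)+1) = c i := by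
    intro i
    simp only [he]
    rw [dif_pos ⟨by omega, by omega⟩]
    exact congrArg c (Fin.ext (by simp))
  have hstep : ∀ j, j + 1 ≤ N + 1 → e j < e (j+1) := by
    intro j hj
    rcases Nat.eq_zero_or_pos j with rfl | hj0
    · rcases Nat.eq_zero_or_pos N with hN | hN0
      · have h2 : e (0+1) = t' := by subst hN; exact heN
        rw [he0, h2]
        by_contra hcon
        push_neg at hcon
        nlinarith [mul_le_mul_of_nonneg_right hcon (le_of_lt hη)]
      · have h2 : e (0+1) = c ⟨0, hN0⟩ := hei ⟨0, hN0⟩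
        rw [he0, h2]
        have := ht2 ⟨0, hN0⟩
        linarith
    · obtain ⟨m, rfl⟩ : ∃ m, j = m + 1 := ⟨j - 1, by omega⟩
      have hmN : m < N := by omega
      have h1 : e (m+1) = c ⟨m, hmN⟩ := hei ⟨m, hmN⟩
      rcases Nat.lt_or_ge (m+1) N with h | h
      · have h2 : e (m+1+1) = c ⟨m+1, h⟩ := hei ⟨m+1, h⟩
        rw [h1, h2]
        exact hc (Fin.mk_lt_mk.mpr (Nat.lt_succ_self m))
      · have h2 : e (m+1+1) = t' := by rw [show m+1+1 = N+1 by omega, heN]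
        rw [h1, h2]
        have := ht'2 ⟨m, hmN⟩
        linarith
  have hmono : ∀ k j, j < k → k ≤ N+1 → e j < e k := by
    intro k
    induction k with
    | zero => omega
    | succ m ih =>
      intro j hj hk
      rcases Nat.lt_or_ge j m with h | h
      · exact lt_trans (ih j h (by omega)) (hstep m hk)
      · have : j = m := by omega
        subst this; exact hstep j hk
  have hsign : ∀ j, j ≤ N + 1 → 0 < (-1:ℝ)^(N+j) * P.eval (e j) := by
    intro j hj
    rcases Nat.eq_zero_or_pos j with rfl | hj0
    · rw [he0, hPA t (fun i => ne_of_lt (by have := ht2 i; linarith)), hAeval]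
      have hsp := sign_prod_aux Finset.univ (fun k : Fin N => t - c k)
        (fun k _ => ne_of_lt (show t - c k < 0 by have := ht2 k; linarith))
      rw [Finset.filter_true_of_mem (fun k _ => show t - c k < 0 by have := ht2 k; linarith),
        Finset.card_univ, Fintype.card_fin] at hsp
      rw [Nat.add_zero, mul_left_comm]
      exact mul_pos hμt hsp
    · obtain ⟨i, rfl⟩ : ∃ m, j = m + 1 := ⟨j - 1, by omega⟩
      rcases Nat.lt_or_ge i N with hiN | hiN
      · have hival : ((⟨i, hiN⟩ : Fin N) : ℕ) = i := rfl
        rw [show e (i+1) = c ⟨i, hiN⟩ from hei ⟨i, hiN⟩, hPc ⟨i, hiN⟩]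
        have hsp := sign_prod_aux (Finset.univ.erase (⟨i, hiN⟩ : Fin N))
          (fun k => c ⟨i, hiN⟩ - c k)
          (fun k hk => sub_ne_zero.mpr fun hEq =>
            (Finset.mem_erase.mp hk).1 (hc.injective hEq.symm))
        have hfe : (Finset.univ.erase (⟨i, hiN⟩ : Fin N)).filter
            (fun k => c ⟨i, hiN⟩ - c k < 0) = Finset.Ioi (⟨i, hiN⟩ : Fin N) := by
          ext k
          simp only [Finset.mem_filter, Finset.mem_erase, Finset.mem_univ, and_true, true_and,
            Finset.mem_Ioi, sub_neg, hc.lt_iff_lt]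
          exact ⟨fun h => h.2, fun h => ⟨ne_of_gt h, h⟩⟩
        rw [hfe, Fin.card_Ioi, hival] at hsp
        rw [neg_one_pow_congr' (show (N+(i+1)) % 2 = (N-1-i) % 2 by omega), mul_left_comm]
        exact mul_pos (pow_pos (hb ⟨i, hiN⟩) 2) hsp
      · have hiN' : i = N := by omega
        subst hiN'
        rw [heN, hPA t' (fun i => ne_of_gt (by have := ht'2 i; linarith)), hAeval]
        have hprod : 0 < ∏ i, (t' - c i) :=
          Finset.prod_pos fun i _ => by have := ht'2 i; linarith
        rw [Odd.neg_one_pow ⟨i, by ring⟩]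
        nlinarith [mul_pos hprod (neg_pos.mpr hμt')]
  have hroot : ∀ j : Fin (N+1), ∃ x, e j < x ∧ x < e ((j:ℕ)+1) ∧ P.eval x = 0 := by
    intro j
    have h1 := hsign j (by omega)
    have h2 := hsign ((j:ℕ)+1) (by omega)
    rw [show N + ((j:ℕ)+1) = (N + (j:ℕ)) + 1 by ring, pow_succ] at h2
    have h2' : 0 < (-1:ℝ)^(N+(j:ℕ)) * (-(P.eval (e ((j:ℕ)+1)))) := by nlinarith [h2]
    have hprod : P.eval (e j) * P.eval (e ((j:ℕ)+1)) < 0 := by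
      nlinarith [pos_of_sign h1 h2']
    have hej : (e j) < e ((j:ℕ)+1) := hstep j (by omega)
    have hcont : ContinuousOn (fun x => P.eval x) (Set.Icc (e j) (e ((j:ℕ)+1))) :=
      (Polynomial.continuous P).continuousOn
    rcases mul_neg_iff.mp hprod with ⟨hp1, hp2⟩ | ⟨hp1, hp2⟩
    · obtain ⟨x, hx, hfx⟩ := intermediate_value_Ioo' (le_of_lt hej) hcont
        (Set.mem_Ioo.mpr ⟨hp2, hp1⟩)
      exact ⟨x, hx.1, hx.2, hfx⟩
    · obtain ⟨x, hx, hfx⟩ := intermediate_value_Ioo (le_of_lt hej) hcont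
        (Set.mem_Ioo.mpr ⟨hp1, hp2⟩)
      exact ⟨x, hx.1, hx.2, hfx⟩
  choose γ0 hγ1 hγ2 hγ3 using hroot
  have hγmono : StrictMono γ0 := by
    intro j k hjk
    have h1 : ((j:ℕ)+1) ≤ (k:ℕ) := hjk
    have h2 : e ((j:ℕ)+1) ≤ e k := by
      rcases Nat.eq_or_lt_of_le h1 with h | h
      · rw [h]
      · exact le_of_lt (hmono _ _ h (by omega))
    exact lt_of_lt_of_le (hγ2 j) (le_trans h2 (le_of_lt (hγ1 k)))
  have hγc1 : ∀ (j : Fin (N+1)) (i : Fin N), (j:ℕ) ≤ (i:ℕ) → γ0 j < c i := by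
    intro j i hji
    have : e ((j:ℕ)+1) ≤ e ((i:ℕ)+1) := by
      rcases Nat.eq_or_lt_of_le hji with h | h
      · rw [h]
      · exact le_of_lt (hmono _ _ (by omega) (by omega))
    rw [hei i] at this
    exact lt_of_lt_of_le (hγ2 j) this
  have hγc2 : ∀ (j : Fin (N+1)) (i : Fin N), (i:ℕ) < (j:ℕ) → c i < γ0 j := by
    intro j i hij
    have : e ((i:ℕ)+1) ≤ e j := by
      rcases Nat.eq_or_lt_of_le (show (i:ℕ)+1 ≤ (j:ℕ) by omega) with h | h
      · rw [h]
      · exact le_of_lt (hmono _ _ h (by omega))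
    rw [hei i] at this
    exact lt_of_le_of_lt this (hγ1 j)
  have hγc : ∀ (j : Fin (N+1)) (i : Fin N), γ0 j ≠ c i := by
    intro j i
    rcases Nat.lt_or_ge (i:ℕ) (j:ℕ) with h | h
    · exact ne_of_gt (hγc2 j i h)
    · exact ne_of_lt (hγc1 j i h)
  -- signs at roots
  have hAγ : ∀ j : Fin (N+1), 0 < (-1:ℝ)^(N-(j:ℕ)) * A.eval (γ0 j) := by
    intro j
    rw [hAeval]
    have hsp := sign_prod_aux Finset.univ (fun i : Fin N => γ0 j - c i)
      (fun i _ => sub_ne_zero.mpr (hγc j i))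
    have hfe : Finset.univ.filter (fun i : Fin N => γ0 j - c i < 0)
        = Finset.univ.filter (fun i : Fin N => (j:ℕ) ≤ (i:ℕ)) := by
      ext i
      simp only [Finset.mem_filter, Finset.mem_univ, true_and, sub_neg]
      constructor
      · intro h
        by_contra hcon
        push_neg at hcon
        exact absurd h (not_lt.mpr (le_of_lt (hγc2 j i hcon)))
      · exact fun h => hγc1 j i h
    have hcard : (Finset.univ.filter (fun i : Fin N => (j:ℕ) ≤ (i:ℕ))).card = N - (j:ℕ) := by
      rcases Nat.lt_or_ge (j:ℕ) N with h | h
      · have heq : Finset.univ.filter (fun i : Fin N => (j:ℕ) ≤ (i:ℕ))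
            = Finset.Ici (⟨(j:ℕ), h⟩ : Fin N) := by
          ext i
          simp [Finset.mem_Ici, Fin.le_def]
        rw [heq, Fin.card_Ici]
      · have heq : Finset.univ.filter (fun i : Fin N => (j:ℕ) ≤ (i:ℕ)) = ∅ := by
          ext i
          simp only [Finset.mem_filter, Finset.mem_univ, true_and, Finset.notMem_empty,
            iff_false, not_le]
          omega
        rw [heq, Finset.card_empty]
        omega
    rw [hfe, hcard] at hsp
    exact hsp
  have hDγ : ∀ j : Fin (N+1),
      0 < (-1:ℝ)^(N-(j:ℕ)) * ∏ k ∈ Finset.univ.erase j, (γ0 j - γ0 k) := by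
    intro j
    have hsp := sign_prod_aux (Finset.univ.erase j) (fun k => γ0 j - γ0 k)
      (fun k hk => sub_ne_zero.mpr fun hEq =>
        (Finset.mem_erase.mp hk).1 (hγmono.injective hEq).symm)
    have hfe : (Finset.univ.erase j).filter (fun k => γ0 j - γ0 k < 0) = Finset.Ioi j := by
      ext k
      simp only [Finset.mem_filter, Finset.mem_erase, Finset.mem_univ, and_true, true_and,
        Finset.mem_Ioi, sub_neg, hγmono.lt_iff_lt]
      exact ⟨fun h => h.2, fun h => ⟨ne_of_gt h, h⟩⟩
    rw [hfe, Fin.card_Ioi] at hsp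
    simpa using hsp
  set w : Fin (N+1) → ℝ := fun j => A.eval (γ0 j) / ∏ k ∈ Finset.univ.erase j, (γ0 j - γ0 k)
    with hw
  have hwpos : ∀ j, 0 < w j := by
    intro j
    rw [hw]
    exact div_pos_iff.mpr (mul_pos_iff.mp (pos_of_sign (hAγ j) (hDγ j)))
  set β : Fin (N+1) → ℝ := fun j => Real.sqrt (w j / η) with hβ
  have hβpos : ∀ j, 0 < β j := fun j => Real.sqrt_pos.mpr (div_pos (hwpos j) hη)
  have hβsq : ∀ j, (β j)^2 = w j / η := fun j =>
    Real.sq_sqrt (le_of_lt (div_pos (hwpos j) hη))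
  -- polynomial identities
  set Q : Polynomial ℝ := ∏ j : Fin (N+1), (X - C (γ0 j)) with hQ
  have hQmonic : Q.Monic := monic_prod_of_monic _ _ fun i _ => monic_X_sub_C _
  have hQdeg : Q.natDegree = N + 1 := by
    rw [hQ, natDegree_prod _ _ fun i _ => X_sub_C_ne_zero _]
    simp [natDegree_X_sub_C]
  have hQeval : ∀ x : ℝ, Q.eval x = ∏ j, (x - γ0 j) := by
    intro x; simp [hQ, eval_prod]
  have hPQ : P = -(C η) * Q := by
    have hQcoeff : Q.coeff (N+1) = 1 := by
      have h := hQmonic.coeff_natDegree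
      rwa [hQdeg] at h
    have hD : P + C η * Q = 0 := by
      apply eq_zero_of_natDegree_lt_card_of_eval_eq_zero _ hγmono.injective
      · intro j
        rw [eval_add, eval_mul, eval_C, hγ3 j, hQeval]
        rw [Finset.prod_eq_zero (Finset.mem_univ j) (by ring : γ0 j - γ0 j = 0)]
        ring
      · have hdle : (P + C η * Q).natDegree ≤ N := by
          rw [natDegree_le_iff_coeff_eq_zero]
          intro m hm
          rw [coeff_add, coeff_C_mul]
          rcases Nat.eq_or_lt_of_le (Nat.succ_le_of_lt hm) with h | h
          · rw [← h, hPcoeff, hQcoeff]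
            ring
          · rw [coeff_eq_zero_of_natDegree_lt (lt_of_le_of_lt hPdeg h),
              coeff_eq_zero_of_natDegree_lt (by rw [hQdeg]; exact h)]
            ring
        rw [Fintype.card_fin]
        omega
    rw [eq_neg_of_add_eq_zero_left hD, neg_mul]
  set L : Polynomial ℝ := ∑ j : Fin (N+1), C (w j) * ∏ k ∈ Finset.univ.erase j,
    (X - C (γ0 k)) with hL
  have hAL : A = L := by
    have hD : A - L = 0 := by
      apply eq_zero_of_natDegree_lt_card_of_eval_eq_zero _ hγmono.injective
      · intro m
        have hne : ∏ k ∈ Finset.univ.erase m, (γ0 m - γ0 k) ≠ 0 :=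
          Finset.prod_ne_zero_iff.mpr fun k hk => sub_ne_zero.mpr fun hEq =>
            (Finset.mem_erase.mp hk).1 (hγmono.injective hEq).symm
        have hLval : L.eval (γ0 m) = w m * ∏ k ∈ Finset.univ.erase m, (γ0 m - γ0 k) := by
          rw [hL, eval_finset_sum]
          simp only [eval_mul, eval_C, eval_prod, eval_sub, eval_X]
          exact Finset.sum_eq_single m (fun k _ hk => mul_eq_zero_of_right _
            (Finset.prod_eq_zero (Finset.mem_erase.mpr ⟨Ne.symm hk, Finset.mem_univ m⟩)
              (by ring)))
            (fun h => absurd (Finset.mem_univ m) h)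
        rw [eval_sub, hLval, sub_eq_zero]
        simp only [hw]
        exact (div_mul_cancel₀ _ hne).symm
      · have hLdeg : L.natDegree ≤ N := by
          rw [hL]
          apply natDegree_sum_le_of_forall_le
          intro j _
          refine le_trans natDegree_mul_le ?_
          rw [natDegree_C, zero_add]
          rw [natDegree_prod_of_monic _ _ fun k _ => monic_X_sub_C _]
          simp only [natDegree_X_sub_C, Finset.sum_const, smul_eq_mul, mul_one]
          rw [Finset.card_erase_of_mem (Finset.mem_univ j), Finset.card_univ, Fintype.card_fin]
          omega
        have hdle : (A - L).natDegree ≤ N :=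
          le_trans (natDegree_sub_le A L) (max_le hAdeg.le hLdeg)
        rw [Fintype.card_fin]
        omega
    exact sub_eq_zero.mp hD
  -- conclusion
  refine ⟨N+1, 0, γ0, β, by omega, hγmono, hβpos, ?_⟩
  intro lam hlamc hlamγ
  have hAe : A.eval lam ≠ 0 := by
    rw [hAeval]
    exact Finset.prod_ne_zero_iff.mpr fun i _ => sub_ne_zero.mpr (hlamc i)
  have hQe : Q.eval lam ≠ 0 := by
    rw [hQeval]
    exact Finset.prod_ne_zero_iff.mpr fun j _ => sub_ne_zero.mpr (hlamγ j)
  have key1 : μ lam * A.eval lam = -η * Q.eval lam := by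
    rw [← hPA lam hlamc, hPQ, eval_mul, eval_neg, eval_C]
  have key2 : (∑ j, (β j)^2 / (lam - γ0 j)) * Q.eval lam = A.eval lam / η := by
    have hterm : ∀ j : Fin (N+1), (β j)^2 / (lam - γ0 j) * Q.eval lam
        = (w j * ∏ k ∈ Finset.univ.erase j, (lam - γ0 k)) / η := by
      intro j
      have hne : lam - γ0 j ≠ 0 := sub_ne_zero.mpr (hlamγ j)
      rw [hβsq, hQeval, ← Finset.mul_prod_erase Finset.univ _ (Finset.mem_univ j)]
      field_simp
    rw [Finset.sum_mul, Finset.sum_congr rfl fun j _ => hterm j, ← Finset.sum_div]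
    congr 1
    rw [hAL, hL, eval_finset_sum]
    simp only [eval_mul, eval_C, eval_prod, eval_sub, eval_X]
  have hfin : μ lam * (0 - ∑ j, (β j)^2 / (lam - γ0 j)) = 1 := by
    apply mul_right_cancel₀ (mul_ne_zero hAe hQe)
    calc (μ lam * (0 - ∑ j, (β j)^2/(lam - γ0 j))) * (A.eval lam * Q.eval lam)
        = -((μ lam * A.eval lam) * ((∑ j, (β j)^2/(lam - γ0 j)) * Q.eval lam)) := by ring
      _ = -((-η * Q.eval lam) * (A.eval lam / η)) := by rw [key1, key2]
      _ = 1 * (A.eval lam * Q.eval lam) := by field_simp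
  exact hfin
end

section
/- Let H = L²(-a,b) ⊕ ℂ^{N'} ⊕ ℂ^{M'} with inner product ⟨Y,Z⟩ = ∫_{-a}^b y z̄ dx + ⟨y¹,z¹⟩ + ⟨y²,z²⟩. For F, G in the domain of L (so their functional components f, g satisfy the boundary conditions, the domain conditions -f(0⁺) + σΔ'f - ⟨f¹,β⟩ = 0 and f'(0⁻) - τΔf - ⟨f²,α⟩ = 0, and similarly for g), the boundary contributions cancel: f(0⁺)Δ'ḡ - ḡ(0⁺)Δ'f + ḡ'(0⁻)Δf - f'(0⁻)Δḡ = (f'ḡ - fḡ')(0⁻) - (f'ḡ - fḡ')(0⁺). Hence ⟨LF, G⟩ = ⟨F, LG⟩, i.e., L is symmetric. -/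
open MeasureTheory intervalIntegral

/-- for `F, G` in the domain of the block operator `L`, the boundary
contributions cancel and `⟨LF, G⟩ = ⟨F, LG⟩`, i.e. `L` is symmetric. Here `lf, lg`
denote `ℓf, ℓg`, the one-sided boundary values at `0` are listed explicitly, and the
Lagrange identity for the differential part is the hypothesis `hLag`. -/
theorem stmt12 (a b : ℝ) (N' M' : ℕ) (σ τ : ℝ)
    (β γ : Fin N' → ℝ) (α δ : Fin M' → ℝ)
    (hβ : ∀ i, 0 < β i) (hα : ∀ j, 0 < α j)
    (f g lf lg : ℝ → ℂ)
    (f1 g1 : Fin N' → ℂ) (f2 g2 : Fin M' → ℂ)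
    (f0m f0p f1m f1p g0m g0p g1m g1p : ℂ)
    (hdf1 : -f0p + σ * (f1p - f1m) - ∑ i, f1 i * (β i : ℂ) = 0)
    (hdf2 : f1m - τ * (f0p - f0m) - ∑ j, f2 j * (α j : ℂ) = 0)
    (hdg1 : -g0p + σ * (g1p - g1m) - ∑ i, g1 i * (β i : ℂ) = 0)
    (hdg2 : g1m - τ * (g0p - g0m) - ∑ j, g2 j * (α j : ℂ) = 0)
    (hLag : (∫ x in (-a)..b, lf x * starRingEnd ℂ (g x)) -
        (∫ x in (-a)..b, f x * starRingEnd ℂ (lg x)) =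
      (-(f1m * starRingEnd ℂ g0m) + f0m * starRingEnd ℂ g1m) +
        (f1p * starRingEnd ℂ g0p - f0p * starRingEnd ℂ g1p)) :
    (f0p * starRingEnd ℂ (g1p - g1m) - starRingEnd ℂ g0p * (f1p - f1m) +
        starRingEnd ℂ g1m * (f0p - f0m) - f1m * starRingEnd ℂ (g0p - g0m) =
      (f1m * starRingEnd ℂ g0m - f0m * starRingEnd ℂ g1m) -
        (f1p * starRingEnd ℂ g0p - f0p * starRingEnd ℂ g1p)) ∧
    ((∫ x in (-a)..b, lf x * starRingEnd ℂ (g x)) +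
        (∑ i, ((β i : ℂ) * (f1p - f1m) + (γ i : ℂ) * f1 i) * starRingEnd ℂ (g1 i)) +
        (∑ j, ((α j : ℂ) * (f0p - f0m) + (δ j : ℂ) * f2 j) * starRingEnd ℂ (g2 j)) =
      (∫ x in (-a)..b, f x * starRingEnd ℂ (lg x)) +
        (∑ i, f1 i * starRingEnd ℂ ((β i : ℂ) * (g1p - g1m) + (γ i : ℂ) * g1 i)) +
        (∑ j, f2 j * starRingEnd ℂ ((α j : ℂ) * (g0p - g0m) + (δ j : ℂ) * g2 j))) := by
  have h1g : -(starRingEnd ℂ) g0p + (σ : ℂ) * ((starRingEnd ℂ) g1p - (starRingEnd ℂ) g1m)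
      - ∑ i, (starRingEnd ℂ) (g1 i) * (β i : ℂ) = 0 := by
    have := congrArg (starRingEnd ℂ) hdg1
    simpa [map_sub, map_add, map_mul, map_sum, Complex.conj_ofReal] using this
  have h2g : (starRingEnd ℂ) g1m - (τ : ℂ) * ((starRingEnd ℂ) g0p - (starRingEnd ℂ) g0m)
      - ∑ j, (starRingEnd ℂ) (g2 j) * (α j : ℂ) = 0 := by
    have := congrArg (starRingEnd ℂ) hdg2
    simpa [map_sub, map_add, map_mul, map_sum, Complex.conj_ofReal] using this
  refine ⟨by simp only [map_sub]; ring, ?_⟩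
  have key1 : (∑ i, ((β i : ℂ) * (f1p - f1m) + (γ i : ℂ) * f1 i) * starRingEnd ℂ (g1 i))
      - (∑ i, f1 i * starRingEnd ℂ ((β i : ℂ) * (g1p - g1m) + (γ i : ℂ) * g1 i)) =
      (f1p - f1m) * ∑ i, (starRingEnd ℂ) (g1 i) * (β i : ℂ)
        - ((starRingEnd ℂ) g1p - (starRingEnd ℂ) g1m) * ∑ i, f1 i * (β i : ℂ) := by
    rw [← Finset.sum_sub_distrib, Finset.mul_sum, Finset.mul_sum, ← Finset.sum_sub_distrib]
    refine Finset.sum_congr rfl fun i _ => ?_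
    simp only [map_add, map_mul, map_sub, Complex.conj_ofReal]
    ring
  have key2 : (∑ j, ((α j : ℂ) * (f0p - f0m) + (δ j : ℂ) * f2 j) * starRingEnd ℂ (g2 j))
      - (∑ j, f2 j * starRingEnd ℂ ((α j : ℂ) * (g0p - g0m) + (δ j : ℂ) * g2 j)) =
      (f0p - f0m) * ∑ j, (starRingEnd ℂ) (g2 j) * (α j : ℂ)
        - ((starRingEnd ℂ) g0p - (starRingEnd ℂ) g0m) * ∑ j, f2 j * (α j : ℂ) := by
    rw [← Finset.sum_sub_distrib, Finset.mul_sum, Finset.mul_sum, ← Finset.sum_sub_distrib]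
    refine Finset.sum_congr rfl fun j _ => ?_
    simp only [map_add, map_mul, map_sub, Complex.conj_ofReal]
    ring
  linear_combination hLag + key1 + key2 - (f1p - f1m) * h1g
    + ((starRingEnd ℂ) g1p - (starRingEnd ℂ) g1m) * hdf1
    - (f0p - f0m) * h2g + ((starRingEnd ℂ) g0p - (starRingEnd ℂ) g0m) * hdf2
end

section
/- Let f¹, g¹ ∈ ℂ^{N'}, β ∈ ℝ^{N'}, γ a real diagonal N'×N' matrix, σ ∈ ℝ, and complex numbers f(0⁺), Δ'f, g(0⁺), Δ'g satisfying the domain conditions -f(0⁺) + σΔ'f - ⟨f¹,β⟩ = 0 and -g(0⁺) + σΔ'g - ⟨g¹,β⟩ = 0 (with real σ, β, γ). Then ⟨βΔ'f + γf¹, g¹⟩ - ⟨f¹, βΔ'g + γg¹⟩ = f(0⁺) Δ'ḡ - ḡ(0⁺) Δ'f. -/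
/-- the first vector-component identity in the symmetry proof:
`⟨βΔ'f + γf¹, g¹⟩ - ⟨f¹, βΔ'g + γg¹⟩ = f(0⁺)Δ'ḡ - ḡ(0⁺)Δ'f`, given the domain
conditions `-f(0⁺) + σΔ'f - ⟨f¹,β⟩ = 0` and `-g(0⁺) + σΔ'g - ⟨g¹,β⟩ = 0`. -/
theorem stmt13 (N' : ℕ) (β γ : Fin N' → ℝ) (σ : ℝ)
    (f1 g1 : Fin N' → ℂ) (f0p dpf g0p dpg : ℂ)
    (hf : -f0p + σ * dpf - ∑ i, f1 i * (β i : ℂ) = 0)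
    (hg : -g0p + σ * dpg - ∑ i, g1 i * (β i : ℂ) = 0) :
    (∑ i, ((β i : ℂ) * dpf + (γ i : ℂ) * f1 i) * starRingEnd ℂ (g1 i)) -
      (∑ i, f1 i * starRingEnd ℂ ((β i : ℂ) * dpg + (γ i : ℂ) * g1 i)) =
    f0p * starRingEnd ℂ dpg - starRingEnd ℂ g0p * dpf := by
  have hf' : ∑ i, f1 i * (β i : ℂ) = -f0p + σ * dpf := by linear_combination -hf
  have hg' : ∑ i, g1 i * (β i : ℂ) = -g0p + σ * dpg := by linear_combination -hg
  have hgc : ∑ i, starRingEnd ℂ (g1 i) * (β i : ℂ) =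
      -starRingEnd ℂ g0p + σ * starRingEnd ℂ dpg := by
    have := congrArg (starRingEnd ℂ) hg'
    simpa [map_sum, Complex.conj_ofReal] using this
  simp only [map_add, add_mul, mul_add, Finset.sum_add_distrib, map_mul, Complex.conj_ofReal]
  have e1 : ∑ i, (β i : ℂ) * dpf * starRingEnd ℂ (g1 i)
      = dpf * ∑ i, starRingEnd ℂ (g1 i) * (β i : ℂ) := by
    rw [Finset.mul_sum]; apply Finset.sum_congr rfl; intros; ring
  have e2 : ∑ i, f1 i * ((β i : ℂ) * starRingEnd ℂ dpg)
      = starRingEnd ℂ dpg * ∑ i, f1 i * (β i : ℂ) := by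
    rw [Finset.mul_sum]; apply Finset.sum_congr rfl; intros; ring
  have e3 : ∑ i, f1 i * ((γ i : ℂ) * starRingEnd ℂ (g1 i))
      = ∑ i, (γ i : ℂ) * f1 i * starRingEnd ℂ (g1 i) := by
    apply Finset.sum_congr rfl; intros; ring
  rw [e1, e2, e3, hgc, hf']
  ring
end
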